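/- Let p ∈ (1, ∞) and, for a ≥ 0, let φ_a(t) = ∫_0^t (a + s)^{p−2} s ds. There exist constants c, C > 0, depending only on p, such that for all a ≥ 0 and all t ≥ 0: c (a + t)^{p−2} t^2 ≤ φ_a(t) ≤ C (a + t)^{p−2} t^2, where for p < 2 the products (a+t)^{p−2} t^2 are interpreted as 0 when a = t = 0. -/

import Mathlib

open intervalIntegral Real Set MeasureTheory

/-- The shifted N-function `φ_a(t) = ∫₀ᵗ (a + s)^{p-2} s ds`. -/
noncomputable def phiShift (p a t : ℝ) : ℝ :=
  ∫ s in (0:ℝ)..t, (a + s) ^ (p - 2) * s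

/-- `c (a+t)^{p-2} t² ≤ φ_a(t) ≤ C (a+t)^{p-2} t²`. -/
theorem phiShift_equiv_power (p : ℝ) (hp1 : 1 < p) :
    ∃ c C : ℝ, 0 < c ∧ 0 < C ∧
      ∀ a t : ℝ, 0 ≤ a → 0 ≤ t →
        c * ((a + t) ^ (p - 2) * t ^ 2) ≤ phiShift p a t ∧
        phiShift p a t ≤ C * ((a + t) ^ (p - 2) * t ^ 2) := by
  have hp0 : (0:ℝ) < p := lt_trans one_pos hp1
  refine ⟨1/(2*p), 1, by positivity, one_pos, ?_⟩
  intro a t ha ht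
  rcases eq_or_lt_of_le ht with rfl | ht
  · simp [phiShift]
  have hA : 0 < a + t := by linarith
  have hX : 0 ≤ (a + t) ^ (p-2) * t ^ 2 := by positivity
  -- key equality on (0,t]
  have keyeq : ∀ s ∈ Set.Ioc (0:ℝ) t,
      (a+t)^(p-2) * t^(2-p) * s^(p-1) = (s/t*(a+t))^(p-2) * s := by
    intro s hs
    have hs0 : 0 < s := hs.1
    rw [Real.mul_rpow (by positivity) hA.le, Real.div_rpow hs0.le ht.le,
      show (p-1:ℝ) = (p-2) + 1 by ring, Real.rpow_add hs0, Real.rpow_one,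
      show (2-p:ℝ) = -(p-2) by ring, Real.rpow_neg ht.le]
    have htp : (0:ℝ) < t ^ (p-2) := Real.rpow_pos_of_pos ht _
    field_simp
  have hmid : ∀ s ∈ Set.Ioc (0:ℝ) t, s/t*(a+t) ≤ a + s ∧ 0 < s/t*(a+t) := by
    intro s hs
    have hs0 : 0 < s := hs.1
    have hst : s ≤ t := hs.2
    constructor
    · rw [div_mul_eq_mul_div, div_le_iff₀ ht]
      nlinarith
    · positivity
  -- integrability pieces
  have meas : AEStronglyMeasurable (fun s => (a+s)^(p-2) * s)
      (volume.restrict (Set.uIoc (0:ℝ) t)) := by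
    rw [Set.uIoc_of_le ht.le]
    refine ContinuousOn.aestronglyMeasurable ?_ measurableSet_Ioc
    refine ContinuousOn.mul ?_ continuousOn_id
    exact ((continuous_const.add continuous_id).continuousOn).rpow_const
      (fun x (hx : x ∈ Set.Ioc (0:ℝ) t) => Or.inl (show a + x ≠ 0 by have := hx.1; positivity))
  have hig1 : IntervalIntegrable (fun s => (a+t)^(p-2) * s) volume 0 t :=
    (continuous_const.mul continuous_id).intervalIntegrable 0 t
  have hig2 : IntervalIntegrable (fun s => (a+t)^(p-2) * t^(2-p) * s^(p-1)) volume 0 t := by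
    exact (intervalIntegrable_rpow' (by linarith)).const_mul _
  -- integral values
  have hv1 : (∫ s in (0:ℝ)..t, (a+t)^(p-2) * s) = (a+t)^(p-2) * t^2 / 2 := by
    rw [intervalIntegral.integral_const_mul, integral_id]
    ring
  have hv2 : (∫ s in (0:ℝ)..t, (a+t)^(p-2) * t^(2-p) * s^(p-1))
      = (a+t)^(p-2) * t^2 / p := by
    rw [intervalIntegral.integral_const_mul, integral_rpow (Or.inl (by linarith))]
    rw [show (p-1+1 : ℝ) = p by ring, Real.zero_rpow hp0.ne']
    have : t^(2-p) * t^p = t^2 := by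
      rw [← Real.rpow_add ht, show (2-p+p:ℝ) = 2 by ring]
      rw [show ((2:ℝ)) = ((2:ℕ):ℝ) by norm_num, Real.rpow_natCast]
    field_simp
    nlinarith [Real.rpow_pos_of_pos hA (p-2)]
  rcases le_or_gt p 2 with hp2 | hp2
  · -- p ≤ 2 : lower via g1, upper via g2
    have hlow : (∫ s in (0:ℝ)..t, (a+t)^(p-2) * s) ≤ phiShift p a t := by
      apply intervalIntegral.integral_mono_on ht.le hig1 ?_ ?_
      · -- integrability of f via upper bound g2
        apply hig2.mono_fun meas
        rw [Set.uIoc_of_le ht.le]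
        filter_upwards [MeasureTheory.ae_restrict_mem measurableSet_Ioc] with s hs
        obtain ⟨h1, h2⟩ := hmid s hs
        have hbd : (a+s)^(p-2) * s ≤ (a+t)^(p-2) * t^(2-p) * s^(p-1) := by
          rw [keyeq s hs]
          exact mul_le_mul_of_nonneg_right
            (Real.rpow_le_rpow_of_nonpos h2 h1 (by linarith)) hs.1.le
        have h0f : 0 ≤ (a+s)^(p-2) * s := mul_nonneg (Real.rpow_nonneg (by linarith [hs.1]) _) hs.1.le
        simp only [Real.norm_eq_abs, abs_of_nonneg h0f,
          abs_of_nonneg (le_trans h0f hbd)]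
        exact hbd
      · intro s hs
        rcases eq_or_lt_of_le hs.1 with rfl | hs0
        · simp
        have hle : (a+t)^(p-2) ≤ (a+s)^(p-2) :=
          Real.rpow_le_rpow_of_nonpos (by linarith) (by linarith [hs.2]) (by linarith)
        exact mul_le_mul_of_nonneg_right hle hs0.le
    have hhigh : phiShift p a t ≤ ∫ s in (0:ℝ)..t, (a+t)^(p-2) * t^(2-p) * s^(p-1) := by
      apply intervalIntegral.integral_mono_on ht.le ?_ hig2 ?_
      · apply hig2.mono_fun meas
        rw [Set.uIoc_of_le ht.le]
        filter_upwards [MeasureTheory.ae_restrict_mem measurableSet_Ioc] with s hs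
        obtain ⟨h1, h2⟩ := hmid s hs
        have hbd : (a+s)^(p-2) * s ≤ (a+t)^(p-2) * t^(2-p) * s^(p-1) := by
          rw [keyeq s hs]
          exact mul_le_mul_of_nonneg_right
            (Real.rpow_le_rpow_of_nonpos h2 h1 (by linarith)) hs.1.le
        have h0f : 0 ≤ (a+s)^(p-2) * s := mul_nonneg (Real.rpow_nonneg (by linarith [hs.1]) _) hs.1.le
        simp only [Real.norm_eq_abs, abs_of_nonneg h0f,
          abs_of_nonneg (le_trans h0f hbd)]
        exact hbd
      · intro s hs
        rcases eq_or_lt_of_le hs.1 with rfl | hs0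
        · simp [Real.zero_rpow (by linarith : p - 1 ≠ 0)]
        obtain ⟨h1, h2⟩ := hmid s ⟨hs0, hs.2⟩
        rw [keyeq s ⟨hs0, hs.2⟩]
        exact mul_le_mul_of_nonneg_right
          (Real.rpow_le_rpow_of_nonpos h2 h1 (by linarith)) hs0.le
    rw [hv1] at hlow
    rw [hv2] at hhigh
    constructor
    · refine le_trans ?_ hlow
      have h12 : (1:ℝ)/(2*p) ≤ 1/2 := by
        rw [div_le_div_iff₀ (by positivity) two_pos]; nlinarith
      nlinarith [mul_le_mul_of_nonneg_right h12 hX]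
    · refine le_trans hhigh ?_
      rw [one_mul, div_le_iff₀ hp0]
      nlinarith
  · -- p > 2 : lower via g2, upper via g1
    have hlow : (∫ s in (0:ℝ)..t, (a+t)^(p-2) * t^(2-p) * s^(p-1)) ≤ phiShift p a t := by
      apply intervalIntegral.integral_mono_on ht.le hig2 ?_ ?_
      · apply hig1.mono_fun meas
        rw [Set.uIoc_of_le ht.le]
        filter_upwards [MeasureTheory.ae_restrict_mem measurableSet_Ioc] with s hs
        have hbd : (a+s)^(p-2) * s ≤ (a+t)^(p-2) * s :=
          mul_le_mul_of_nonneg_right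
            (Real.rpow_le_rpow (by linarith [hs.1]) (by linarith [hs.2]) (by linarith)) hs.1.le
        have h0f : 0 ≤ (a+s)^(p-2) * s := mul_nonneg (Real.rpow_nonneg (by linarith [hs.1]) _) hs.1.le
        simp only [Real.norm_eq_abs, abs_of_nonneg h0f,
          abs_of_nonneg (le_trans h0f hbd)]
        exact hbd
      · intro s hs
        rcases eq_or_lt_of_le hs.1 with rfl | hs0
        · simp [Real.zero_rpow (by linarith : p - 1 ≠ 0)]
        obtain ⟨h1, h2⟩ := hmid s ⟨hs0, hs.2⟩
        rw [keyeq s ⟨hs0, hs.2⟩]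
        exact mul_le_mul_of_nonneg_right
          (Real.rpow_le_rpow h2.le h1 (by linarith)) hs0.le
    have hhigh : phiShift p a t ≤ ∫ s in (0:ℝ)..t, (a+t)^(p-2) * s := by
      apply intervalIntegral.integral_mono_on ht.le ?_ hig1 ?_
      · apply hig1.mono_fun meas
        rw [Set.uIoc_of_le ht.le]
        filter_upwards [MeasureTheory.ae_restrict_mem measurableSet_Ioc] with s hs
        have hbd : (a+s)^(p-2) * s ≤ (a+t)^(p-2) * s :=
          mul_le_mul_of_nonneg_right
            (Real.rpow_le_rpow (by linarith [hs.1]) (by linarith [hs.2]) (by linarith)) hs.1.le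
        have h0f : 0 ≤ (a+s)^(p-2) * s := mul_nonneg (Real.rpow_nonneg (by linarith [hs.1]) _) hs.1.le
        simp only [Real.norm_eq_abs, abs_of_nonneg h0f,
          abs_of_nonneg (le_trans h0f hbd)]
        exact hbd
      · intro s hs
        rcases eq_or_lt_of_le hs.1 with rfl | hs0
        · simp
        exact mul_le_mul_of_nonneg_right
          (Real.rpow_le_rpow (by linarith [hs.1]) (by linarith [hs.2]) (by linarith)) hs0.le
    rw [hv2] at hlow
    rw [hv1] at hhigh
    constructor
    · refine le_trans ?_ hlow
      have h12 : (1:ℝ)/(2*p) ≤ 1/p := by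
        rw [div_le_div_iff₀ (by positivity) hp0]; nlinarith
      calc 1/(2*p) * ((a + t) ^ (p - 2) * t ^ 2)
          ≤ 1/p * ((a + t) ^ (p - 2) * t ^ 2) := mul_le_mul_of_nonneg_right h12 hX
        _ = (a + t) ^ (p - 2) * t ^ 2 / p := by ring
    · refine le_trans hhigh ?_
      rw [one_mul, div_le_iff₀ two_pos]
      nlinarith
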